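/- Suppose P₀/Q₀ is a reduced proper fraction in an open interval (a,b) ⊆ (0,1) with minimal denominator. Then P₀ is the unique numerator achieving the minimal denominator: if p/q ∈ (a,b) is reduced with q = Q₀, then p = P₀. -/
import Mathlib

lemma aux_between (a b : ℚ) (Q0 m : ℕ) (hm : 0 < m) (hmQ : m + 1 < Q0)
    (h1 : a < (m : ℚ) / Q0) (h2 : ((m : ℚ) + 1) / Q0 < b)
    (hmin : ∀ p q : ℕ, 0 < p → p < q → Nat.Coprime p q →
      a < (p : ℚ) / q → (p : ℚ) / q < b → Q0 ≤ q) : False := by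
  set n := Q0 - 1 with hn
  have hQ0pos : 0 < Q0 := by omega
  have hnpos : 0 < n := by omega
  have hmn : m < n := by omega
  set g := Nat.gcd m n with hg
  have hgpos : 0 < g := Nat.gcd_pos_of_pos_left n hm
  have hdm : g ∣ m := Nat.gcd_dvd_left m n
  have hdn : g ∣ n := Nat.gcd_dvd_right m n
  have hp' : 0 < m / g := Nat.div_pos (Nat.le_of_dvd hm hdm) hgpos
  have hlt : m / g < n / g := Nat.div_lt_div_of_lt_of_dvd hdn hmn
  have hcop : Nat.Coprime (m / g) (n / g) := Nat.coprime_div_gcd_div_gcd hgpos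
  -- value equality
  have hval : ((m / g : ℕ) : ℚ) / ((n / g : ℕ) : ℚ) = (m : ℚ) / n := by
    rw [Nat.cast_div hdm (by exact_mod_cast hgpos.ne'),
        Nat.cast_div hdn (by exact_mod_cast hgpos.ne')]
    have hg0 : (g : ℚ) ≠ 0 := by exact_mod_cast hgpos.ne'
    field_simp
  have hQ0q : (0 : ℚ) < (Q0 : ℚ) := by exact_mod_cast hQ0pos
  have hnq : (0 : ℚ) < (n : ℚ) := by exact_mod_cast hnpos
  have hnn : (n : ℚ) < Q0 := by exact_mod_cast (by omega : n < Q0)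
  have ha' : a < (m : ℚ) / n := by
    refine lt_trans h1 ?_
    apply div_lt_div_of_pos_left (by exact_mod_cast hm) hnq hnn
  have hb' : (m : ℚ) / n < b := by
    refine lt_trans ?_ h2
    rw [div_lt_div_iff₀ hnq hQ0q]
    have : (m : ℚ) * Q0 < ((m : ℚ) + 1) * n := by
      have hQn : Q0 = n + 1 := by omega
      have : m * Q0 < (m + 1) * n := by nlinarith [hmn]
      exact_mod_cast this
    linarith
  have := hmin (m / g) (n / g) hp' hlt hcop (by rwa [hval]) (by rwa [hval])
  have : n / g ≤ n := Nat.div_le_self n g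
  omega

theorem stmt2 (a b : ℚ) (ha : 0 ≤ a) (hab : a < b) (hb : b ≤ 1)
    (P0 Q0 : ℕ) (hP0 : 0 < P0) (hPQ : P0 < Q0) (hcop : Nat.Coprime P0 Q0)
    (hmem : a < (P0 : ℚ) / Q0 ∧ (P0 : ℚ) / Q0 < b)
    (hmin : ∀ p q : ℕ, 0 < p → p < q → Nat.Coprime p q →
      a < (p : ℚ) / q → (p : ℚ) / q < b → Q0 ≤ q) :
    ∀ p q : ℕ, 0 < p → p < q → Nat.Coprime p q →
      a < (p : ℚ) / q → (p : ℚ) / q < b → q = Q0 → p = P0 := by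
  intro p q hp hpq hcop' ha' hb' hq
  subst hq
  have hqq : (0 : ℚ) < (q : ℚ) := by exact_mod_cast (by omega : 0 < q)
  rcases lt_trichotomy p P0 with h | h | h
  · exfalso
    apply aux_between a b q p hp (by omega) ha' ?_ hmin
    calc ((p : ℚ) + 1) / q ≤ (P0 : ℚ) / q := by
          gcongr
          exact_mod_cast (by omega : p + 1 ≤ P0)
      _ < b := hmem.2
  · exact h
  · exfalso
    apply aux_between a b q P0 hP0 (by omega) hmem.1 ?_ hmin
    calc ((P0 : ℚ) + 1) / q ≤ (p : ℚ) / q := by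
          gcongr
          exact_mod_cast (by omega : P0 + 1 ≤ p)
      _ < b := hb'
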